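/- arXiv:2003.00589 — 3 statements merged into one kernel-verified Lean document; each statement's English description precedes it below -/
import Mathlib

section
/- Define the sequence b_d by b_0 = b_1 = 0, b_2 = 2, and for d ≥ 2, b_{d+1} = c_{-(d+1)} + Σ_{j=1}^{d} (-1)^(d-j) · C(b_j + 1, d - j + 2), where c_{-2} = 2, c_{-4} = -1, and c_s = 0 for all other s, and C is the polynomial binomial coefficient. Then b_3 = 3, b_4 = 4, and for all d ≥ 3, b_d = ℓ_{d-3}, where ℓ_0 = 3 and ℓ_{n+1} = 1 + Σ_{j=0}^{n} (-1)^j · binom(ℓ_{n-j}, j+2). -/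
/-- The polynomial binomial coefficient `C(m, r) = (1/r!) * ∏_{j=0}^{r-1} (m - j)`. -/
noncomputable def pbc (m : ℚ) (r : ℕ) : ℚ :=
  (∏ j ∈ Finset.range r, (m - j)) / (r.factorial : ℚ)

lemma prod_cast_eq_descFactorial (m r : ℕ) :
    (∏ j ∈ Finset.range r, ((m : ℚ) - j)) = (m.descFactorial r : ℚ) := by
  induction r with
  | zero => simp
  | succ r ih =>
    rw [Finset.prod_range_succ, ih, Nat.descFactorial_succ]
    rcases le_or_gt (r+1) m with h | h
    · push_cast [Nat.cast_sub (by omega : r ≤ m)]; ring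
    · rcases lt_or_ge m (r) with h2 | h2
      · rw [Nat.descFactorial_of_lt h2]; simp
      · have : m = r := by omega
        subst this; simp

lemma pbc_natCast (m r : ℕ) : pbc (m : ℚ) r = (m.choose r : ℚ) := by
  rw [pbc, prod_cast_eq_descFactorial, Nat.descFactorial_eq_factorial_mul_choose]
  push_cast
  rw [mul_comm, mul_div_assoc, div_self (by positivity), mul_one]


lemma claimA (a b : ℕ) (hab : a ≤ b) : ∀ r, a.choose r * b^r ≤ b.choose r * a^r := by
  intro r
  induction r with
  | zero => simp
  | succ r ih =>
    have hpos : 0 < r + 1 := Nat.succ_pos r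
    apply Nat.le_of_mul_le_mul_right _ hpos
    have key : (a - r) * b ≤ (b - r) * a := by
      have h1 : a * b = b * a := Nat.mul_comm a b
      have h2 : r * a ≤ r * b := Nat.mul_le_mul_left r hab
      rw [Nat.sub_mul, Nat.sub_mul]
      omega
    calc a.choose (r+1) * b^(r+1) * (r+1)
        = (a.choose (r+1) * (r+1)) * b^(r+1) := by ring
      _ = (a.choose r * (a - r)) * b^(r+1) := by rw [Nat.choose_succ_right_eq]
      _ = (a.choose r * b^r) * ((a - r) * b) := by ring
      _ ≤ (b.choose r * a^r) * ((b - r) * a) := Nat.mul_le_mul ih key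
      _ = (b.choose r * (b - r)) * a^(r+1) := by ring
      _ = (b.choose (r+1) * (r+1)) * a^(r+1) := by rw [Nat.choose_succ_right_eq]
      _ = b.choose (r+1) * a^(r+1) * (r+1) := by ring

lemma pow_ineq (a b : ℕ) (ha : 6 ≤ a) (hab : a ≤ b) (h4 : a*a ≤ 4*b) :
    ∀ r, 3 ≤ r → a^(r+1) ≤ 2*b^r := by
  intro r hr
  induction r, hr using Nat.le_induction with
  | base =>
    have h36 : 36 ≤ a*a := Nat.mul_le_mul ha ha
    have hb : 9 ≤ b := by omega
    calc a^(3+1) = (a*a)*(a*a) := by ring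
      _ ≤ (4*b)*(4*b) := Nat.mul_le_mul h4 h4
      _ = 16*(b*b) := by ring
      _ ≤ (2*b)*(b*b) := Nat.mul_le_mul_right _ (by omega)
      _ = 2*b^3 := by ring
  | succ r hr ih =>
    calc a^(r+1+1) = a^(r+1)*a := by ring
      _ ≤ (2*b^r)*b := Nat.mul_le_mul ih hab
      _ = 2*b^(r+1) := by ring

lemma chainK (a b r : ℕ) (ha : 3 ≤ a) (hab : a ≤ b) (h4 : a*a ≤ 4*b) (hr : 3 ≤ r) :
    2 * a.choose (r+1) ≤ b.choose r := by
  rcases lt_or_ge a 6 with hsmall | hbig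
  · interval_cases a
    · rw [Nat.choose_eq_zero_of_lt (by omega)]; simp
    · -- a = 4
      rcases Nat.lt_or_ge r 4 with h | h
      · have : r = 3 := by omega
        subst this
        calc 2 * Nat.choose 4 4 ≤ Nat.choose 4 3 := by decide
          _ ≤ b.choose 3 := Nat.choose_le_choose _ hab
      · rw [Nat.choose_eq_zero_of_lt (by omega)]; simp
    · -- a = 5
      have hb7 : 7 ≤ b := by omega
      rcases Nat.lt_or_ge r 5 with h | h
      · interval_cases r
        · calc 2 * Nat.choose 5 4 ≤ Nat.choose 7 3 := by decide
            _ ≤ b.choose 3 := Nat.choose_le_choose _ hb7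
        · calc 2 * Nat.choose 5 5 ≤ Nat.choose 7 4 := by decide
            _ ≤ b.choose 4 := Nat.choose_le_choose _ hb7
      · rw [Nat.choose_eq_zero_of_lt (by omega)]; simp
  · have hA := claimA a b hab r
    have hP := pow_ineq a b hbig hab h4 r hr
    have hpos : 0 < 2 * a^r := by positivity
    apply Nat.le_of_mul_le_mul_right _ hpos
    have h1 : a.choose (r+1) * (r+1) = a.choose r * (a - r) := Nat.choose_succ_right_eq a r
    have h2 : 4 * a.choose (r+1) ≤ a.choose r * a := by
      calc 4 * a.choose (r+1) ≤ (r+1) * a.choose (r+1) := Nat.mul_le_mul_right _ (by omega)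
        _ = a.choose (r+1) * (r+1) := Nat.mul_comm _ _
        _ = a.choose r * (a - r) := h1
        _ ≤ a.choose r * a := Nat.mul_le_mul_left _ (Nat.sub_le a r)
    calc 2 * a.choose (r+1) * (2 * a^r) = (4 * a.choose (r+1)) * a^r := by ring
      _ ≤ (a.choose r * a) * a^r := Nat.mul_le_mul_right _ h2
      _ = a.choose r * a^(r+1) := by ring
      _ ≤ a.choose r * (2*b^r) := Nat.mul_le_mul_left _ hP
      _ = 2 * (a.choose r * b^r) := by ring
      _ ≤ 2 * (b.choose r * a^r) := Nat.mul_le_mul_left _ hA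
      _ = b.choose r * (2 * a^r) := by ring

lemma ell_invariant (ℓ : ℕ → ℤ) (h0 : ℓ 0 = 3)
    (hrec : ∀ n : ℕ, ℓ (n + 1) =
      1 + ∑ j ∈ Finset.range (n + 1), (-1) ^ j * ((ℓ (n - j)).toNat.choose (j + 2) : ℤ)) :
    ∀ n, 3 ≤ ℓ n ∧ ℓ n ≤ ℓ (n+1) ∧ ℓ n * ℓ n ≤ 4 * ℓ (n+1) := by
  have h1 : ℓ 1 = 4 := by rw [hrec 0]; simp [h0]
  have h2 : ℓ 2 = 6 := by rw [hrec 1]; simp [Finset.sum_range_succ, h0, h1]; decide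
  have h3 : ℓ 3 = 12 := by rw [hrec 2]; simp [Finset.sum_range_succ, h0, h1, h2]; decide
  have h4 : ℓ 4 = 48 := by rw [hrec 3]; simp [Finset.sum_range_succ, h0, h1, h2, h3]; decide
  have h5 : ℓ 5 = 924 := by rw [hrec 4]; simp [Finset.sum_range_succ, h0, h1, h2, h3, h4]; decide
  intro n
  induction n using Nat.strong_induction_on with
  | _ n IH =>
  rcases lt_or_ge n 5 with hn | hn
  · interval_cases n <;> norm_num [h0, h1, h2, h3, h4, h5]
  · -- n ≥ 5
    have hposℓ : ∀ k, k ≤ n → 3 ≤ ℓ k := by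
      intro k hk
      rcases eq_or_lt_of_le hk with rfl | hk'
      · have p := IH (k-1) (by omega)
        have e : k - 1 + 1 = k := by omega
        rw [e] at p
        linarith [p.1, p.2.1]
      · exact (IH k hk').1
    have hL : ∀ k, k ≤ n → (((ℓ k).toNat : ℤ)) = ℓ k :=
      fun k hk => Int.toNat_of_nonneg (by linarith [hposℓ k hk])
    have hstep : ∀ i, i + 1 ≤ n → ∀ r, 3 ≤ r →
        2 * ((ℓ i).toNat.choose (r+1)) ≤ (ℓ (i+1)).toNat.choose r := by
      intro i hi r hr
      have p := IH i (by omega)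
      have c1 : (3:ℤ) ≤ ((ℓ i).toNat : ℤ) := by rw [hL i (by omega)]; exact p.1
      have c2 : (((ℓ i).toNat : ℤ)) ≤ ((ℓ (i+1)).toNat : ℤ) := by
        rw [hL i (by omega), hL (i+1) hi]; exact p.2.1
      have c3 : (((ℓ i).toNat : ℤ)) * ((ℓ i).toNat : ℤ) ≤ 4 * ((ℓ (i+1)).toNat : ℤ) := by
        rw [hL i (by omega), hL (i+1) hi]; exact p.2.2
      exact chainK _ _ r (by exact_mod_cast c1) (by exact_mod_cast c2) (by exact_mod_cast c3) hr
    have U : ∀ i, i + 1 ≤ n →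
        (∑ k ∈ Finset.range (i+1), ((ℓ k).toNat.choose (n+2-k))) ≤
          2 * ((ℓ i).toNat.choose (n+2-i)) := by
      intro i
      induction i with
      | zero => intro _; simp [Finset.sum_range_one]; omega
      | succ i ih =>
        intro hi
        rw [Finset.sum_range_succ]
        have hA := ih (by omega)
        have hB := hstep i (by omega) (n+1-i) (by omega)
        have e1 : n+2-i = (n+1-i)+1 := by omega
        have e2 : n+2-(i+1) = n+1-i := by omega
        rw [e2]
        rw [e1] at hA
        omega
    have hsum : (∑ i ∈ Finset.range n, ((ℓ (n - (i+1))).toNat.choose (i+3))) ≤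
        2 * ((ℓ (n-1)).toNat.choose 3) := by
      have hreflect : ∑ i ∈ Finset.range n, ((ℓ (n-(i+1))).toNat.choose (i+3)) =
          ∑ k ∈ Finset.range n, ((ℓ k).toNat.choose (n+2-k)) := by
        rw [← Finset.sum_range_reflect (fun k => (ℓ k).toNat.choose (n+2-k)) n]
        apply Finset.sum_congr rfl
        intro i hi
        simp only [Finset.mem_range] at hi
        rw [show n-1-i = n-(i+1) from by omega, show n+2-(n-(i+1)) = i+3 from by omega]
      rw [hreflect]
      have hU := U (n-1) (by omega)
      have e : n - 1 + 1 = n := by omega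
      have e2 : n + 2 - (n-1) = 3 := by omega
      rw [e, e2] at hU
      exact hU
    -- expand the recursion at n
    have expand := hrec n
    rw [Finset.sum_range_succ'] at expand
    simp only [pow_zero, one_mul, Nat.sub_zero] at expand
    have hterm : ∀ i ∈ Finset.range n,
        -(((ℓ (n-(i+1))).toNat.choose (i+1+2) : ℤ)) ≤
          (-1)^(i+1) * ((ℓ (n-(i+1))).toNat.choose (i+1+2) : ℤ) := by
      intro i _
      rcases Nat.even_or_odd (i+1) with he | ho
      · rw [he.neg_one_pow, one_mul]
        have : (0:ℤ) ≤ ((ℓ (n-(i+1))).toNat.choose (i+1+2) : ℤ) := by positivity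
        linarith
      · rw [ho.neg_one_pow, neg_one_mul]
    have hS : -(2 * (((ℓ (n-1)).toNat.choose 3 : ℤ))) ≤
        ∑ i ∈ Finset.range n, (-1)^(i+1) * ((ℓ (n-(i+1))).toNat.choose (i+1+2) : ℤ) := by
      have c1 : (∑ i ∈ Finset.range n, (((ℓ (n-(i+1))).toNat.choose (i+1+2) : ℤ)))
          ≤ 2 * ((ℓ (n-1)).toNat.choose 3 : ℤ) := by exact_mod_cast hsum
      calc -(2 * (((ℓ (n-1)).toNat.choose 3 : ℤ)))
          ≤ -(∑ i ∈ Finset.range n, (((ℓ (n-(i+1))).toNat.choose (i+1+2) : ℤ))) := by linarith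
        _ = ∑ i ∈ Finset.range n, -(((ℓ (n-(i+1))).toNat.choose (i+1+2) : ℤ)) := by
            rw [Finset.sum_neg_distrib]
        _ ≤ _ := Finset.sum_le_sum hterm
    have bound : 1 + ((ℓ n).toNat.choose 2 : ℤ) - 2*((ℓ (n-1)).toNat.choose 3 : ℤ) ≤ ℓ (n+1) := by
      rw [expand]; linarith [hS]
    -- numeric facts
    have en : n - 1 + 1 = n := by omega
    have p1 := IH (n-1) (by omega)
    rw [en] at p1
    have mono : ∀ m, 4 ≤ m → m ≤ n → ℓ 4 ≤ ℓ m := by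
      intro m hm4 hmn
      induction m, hm4 using Nat.le_induction with
      | base => exact le_refl _
      | succ m hm ih =>
        exact le_trans (ih (by omega)) (IH m (by omega)).2.1
    have ha48 : (48:ℤ) ≤ ℓ (n-1) := by
      have := mono (n-1) (by omega) (by omega); omega
    have hA48 : 48 ≤ (ℓ (n-1)).toNat := by omega
    have haN : (ℓ (n-1)).toNat ≤ (ℓ n).toNat := by
      have := p1.2.1; omega
    have hsq : (ℓ (n-1)).toNat * (ℓ (n-1)).toNat ≤ 4 * (ℓ n).toNat := by
      have h' : ((ℓ (n-1)).toNat : ℤ) * ((ℓ (n-1)).toNat : ℤ) ≤ 4 * ((ℓ n).toNat : ℤ) := by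
        rw [hL (n-1) (by omega), hL n le_rfl]; exact p1.2.2
      exact_mod_cast h'
    have f1 : (ℓ n).toNat.choose 2 * 2 = (ℓ n).toNat * ((ℓ n).toNat - 1) := by
      have := Nat.choose_succ_right_eq (ℓ n).toNat 1
      rwa [Nat.choose_one_right] at this
    have f2a : (ℓ (n-1)).toNat.choose 3 * 3 = (ℓ (n-1)).toNat.choose 2 * ((ℓ (n-1)).toNat - 2) :=
      Nat.choose_succ_right_eq (ℓ (n-1)).toNat 2
    have f2b : (ℓ (n-1)).toNat.choose 2 * 2 = (ℓ (n-1)).toNat * ((ℓ (n-1)).toNat - 1) := by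
      have := Nat.choose_succ_right_eq (ℓ (n-1)).toNat 1
      rwa [Nat.choose_one_right] at this
    have f2 : (ℓ (n-1)).toNat.choose 3 * 6 ≤
        (ℓ (n-1)).toNat * (ℓ (n-1)).toNat * (ℓ (n-1)).toNat := by
      calc (ℓ (n-1)).toNat.choose 3 * 6 = ((ℓ (n-1)).toNat.choose 3 * 3) * 2 := by ring
        _ = ((ℓ (n-1)).toNat.choose 2 * ((ℓ (n-1)).toNat - 2)) * 2 := by rw [f2a]
        _ = ((ℓ (n-1)).toNat.choose 2 * 2) * ((ℓ (n-1)).toNat - 2) := by ring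
        _ = ((ℓ (n-1)).toNat * ((ℓ (n-1)).toNat - 1)) * ((ℓ (n-1)).toNat - 2) := by rw [f2b]
        _ ≤ ((ℓ (n-1)).toNat * (ℓ (n-1)).toNat) * (ℓ (n-1)).toNat :=
            Nat.mul_le_mul (Nat.mul_le_mul_left _ (Nat.sub_le _ _)) (Nat.sub_le _ _)
    have f6 : 3 * ((ℓ (n-1)).toNat * (ℓ (n-1)).toNat * (ℓ (n-1)).toNat) ≤
        (ℓ n).toNat * (ℓ n).toNat := by
      refine Nat.le_of_mul_le_mul_left ?_ (show 0 < 16 by norm_num)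
      calc 16 * (3 * ((ℓ (n-1)).toNat * (ℓ (n-1)).toNat * (ℓ (n-1)).toNat))
          = 48 * ((ℓ (n-1)).toNat * (ℓ (n-1)).toNat * (ℓ (n-1)).toNat) := by ring
        _ ≤ (ℓ (n-1)).toNat * ((ℓ (n-1)).toNat * (ℓ (n-1)).toNat * (ℓ (n-1)).toNat) :=
            Nat.mul_le_mul_right _ hA48
        _ = ((ℓ (n-1)).toNat * (ℓ (n-1)).toNat) * ((ℓ (n-1)).toNat * (ℓ (n-1)).toNat) := by ring
        _ ≤ (4 * (ℓ n).toNat) * (4 * (ℓ n).toNat) := Nat.mul_le_mul hsq hsq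
        _ = 16 * ((ℓ n).toNat * (ℓ n).toNat) := by ring
    have f7 : 48 * (ℓ n).toNat ≤ (ℓ n).toNat * (ℓ n).toNat :=
      Nat.mul_le_mul_right _ (le_trans hA48 haN)
    -- cast to ℤ
    have hN1 : 1 ≤ (ℓ n).toNat := by omega
    have hA2 : 2 ≤ (ℓ (n-1)).toNat := by omega
    zify [hN1] at f1
    zify at f2 f6 f7
    have hLn := hL n le_rfl
    have g2 : ℓ n * ℓ n ≤ 4 * ℓ (n+1) := by
      rw [← hLn]
      linarith [bound, f1, f2, f6, f7]
    refine ⟨hposℓ n le_rfl, ?_, g2⟩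
    have h48N : (48:ℤ) ≤ ((ℓ n).toNat : ℤ) := by exact_mod_cast le_trans hA48 haN
    have g2' : ((ℓ n).toNat : ℤ) * ((ℓ n).toNat : ℤ) ≤ 4 * ℓ (n+1) := by rw [hLn]; exact g2
    rw [← hLn]
    linarith [g2', f7, h48N]


lemma ident (ℓ : ℕ → ℤ)
    (hrec : ∀ n : ℕ, ℓ (n + 1) =
      1 + ∑ j ∈ Finset.range (n + 1), (-1) ^ j * ((ℓ (n - j)).toNat.choose (j + 2) : ℤ))
    (hpos : ∀ k, 0 ≤ ℓ k) :
    ∀ n, 1 ≤ n →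
      ∑ k ∈ Finset.range (n+1), (-1)^k * ((ℓ (n-k)).toNat.choose (k+1) : ℤ) = 1 := by
  intro n hn
  have e : n - 1 + 1 = n := by omega
  have hr := hrec (n-1)
  rw [e] at hr
  rw [Finset.sum_range_succ']
  simp only [pow_zero, one_mul, Nat.sub_zero, zero_add, Nat.choose_one_right]
  have hcast : ((ℓ n).toNat : ℤ) = ℓ n := Int.toNat_of_nonneg (hpos n)
  have hflip : ∑ k ∈ Finset.range n, (-1:ℤ)^(k+1) * ((ℓ (n-(k+1))).toNat.choose (k+1+1) : ℤ)
      = -∑ j ∈ Finset.range n, (-1:ℤ)^j * ((ℓ (n-1-j)).toNat.choose (j+2) : ℤ) := by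
    rw [← Finset.sum_neg_distrib]
    apply Finset.sum_congr rfl
    intro k _
    rw [show n-(k+1) = n-1-k from by omega, pow_succ]
    ring
  rw [hflip, hcast]
  have : ∑ j ∈ Finset.range n, (-1:ℤ)^j * ((ℓ (n-1-j)).toNat.choose (j+2) : ℤ) = ℓ n - 1 := by
    linarith [hr]
  rw [this]
  ring


theorem b_eq_hamilton (ℓ : ℕ → ℤ) (h0 : ℓ 0 = 3)
    (hrec : ∀ n : ℕ, ℓ (n + 1) =
      1 + ∑ j ∈ Finset.range (n + 1), (-1) ^ j * ((ℓ (n - j)).toNat.choose (j + 2) : ℤ))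
    (b : ℕ → ℚ) (hb0 : b 0 = 0) (hb1 : b 1 = 0) (hb2 : b 2 = 2)
    (hbrec : ∀ d : ℕ, 2 ≤ d →
      b (d + 1) = (if d + 1 = 2 then (2 : ℚ) else if d + 1 = 4 then -1 else 0) +
        ∑ j ∈ Finset.Icc 1 d, (-1) ^ (d - j) * pbc (b j + 1) (d - j + 2)) :
    b 3 = 3 ∧ b 4 = 4 ∧ ∀ d : ℕ, 3 ≤ d → b d = (ℓ (d - 3) : ℚ) := by
  have inv := ell_invariant ℓ h0 hrec
  have hpos : ∀ k, 0 ≤ ℓ k := fun k => by linarith [(inv k).1]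
  have hL : ∀ k, ((ℓ k).toNat : ℤ) = ℓ k := fun k => Int.toNat_of_nonneg (hpos k)
  have hLQ : ∀ k, (((ℓ k).toNat : ℚ)) = ((ℓ k : ℤ) : ℚ) := by
    intro k
    exact_mod_cast congrArg (fun z : ℤ => (z : ℚ)) (hL k)
  have hident := ident ℓ hrec hpos
  have hv1 : ℓ 1 = 4 := by rw [hrec 0]; simp [h0]
  have pb1 : ∀ r, 2 ≤ r → pbc 1 r = 0 := by
    intro r hr
    have h := pbc_natCast 1 r
    rw [Nat.choose_eq_zero_of_lt (by omega)] at h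
    simpa using h
  have pb3 : ∀ r, 4 ≤ r → pbc 3 r = 0 := by
    intro r hr
    have h := pbc_natCast 3 r
    rw [Nat.choose_eq_zero_of_lt (by omega)] at h
    simpa using h
  have p32 : pbc 3 2 = 3 := by
    have h := pbc_natCast 3 2
    rw [show Nat.choose 3 2 = 3 from by decide] at h
    simpa using h
  have p33 : pbc 3 3 = 1 := by
    have h := pbc_natCast 3 3
    rw [show Nat.choose 3 3 = 1 from by decide] at h
    simpa using h
  have p42 : pbc 4 2 = 6 := by
    have h := pbc_natCast 4 2
    rw [show Nat.choose 4 2 = 6 from by decide] at h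
    simpa using h
  have e12 : Finset.Icc 1 2 = {1, 2} := by decide
  have e13 : Finset.Icc (1:ℕ) 3 = {1, 2, 3} := by decide
  have hb3 : b 3 = 3 := by
    have h := hbrec 2 le_rfl
    norm_num [e12, hb1, hb2] at h
    rw [h, pb1 3 (by norm_num), p32]
    norm_num
  have hb4 : b 4 = 4 := by
    have h := hbrec 3 (by norm_num)
    norm_num [e13, hb1, hb2, hb3] at h
    rw [h, pb1 4 (by norm_num), p33, p42]
    norm_num
  have hrQ : ∀ n, ((ℓ (n+1) : ℤ) : ℚ) =
      1 + ∑ j ∈ Finset.range (n+1), (-1:ℚ)^j * (((ℓ (n-j)).toNat.choose (j+2) : ℕ) : ℚ) := by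
    intro n
    rw [hrec n]
    push_cast
    ring
  have hidQ : ∀ n, 1 ≤ n →
      ∑ k ∈ Finset.range (n+1), (-1:ℚ)^k * (((ℓ (n-k)).toNat.choose (k+1) : ℕ) : ℚ) = 1 := by
    intro n hn
    exact_mod_cast hident n hn
  have main : ∀ d : ℕ, 3 ≤ d → b d = ((ℓ (d-3) : ℤ) : ℚ) := by
    intro d
    induction d using Nat.strong_induction_on with
    | _ d IH =>
    intro hd
    rcases lt_or_ge d 5 with hd5 | hd5
    · interval_cases d
      · rw [show (3:ℕ)-3 = 0 from rfl, h0, hb3]; norm_num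
      · rw [show (4:ℕ)-3 = 1 from rfl, hv1, hb4]; norm_num
    · obtain ⟨e, rfl⟩ : ∃ e, d = e + 1 := ⟨d-1, by omega⟩
      have he : 4 ≤ e := by omega
      have h := hbrec e (by omega)
      rw [if_neg (by omega), if_neg (by omega), zero_add] at h
      have hsplit : Finset.Icc 1 e = insert 1 (insert 2 (Finset.Icc 3 e)) := by
        ext x
        simp only [Finset.mem_Icc, Finset.mem_insert]
        omega
      rw [hsplit, Finset.sum_insert (by simp only [Finset.mem_insert, Finset.mem_Icc]; omega),
        Finset.sum_insert (by simp only [Finset.mem_Icc]; omega)] at h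
      have t1 : ((-1:ℚ))^(e-1) * pbc (b 1 + 1) (e-1+2) = 0 := by
        rw [hb1, zero_add, show e-1+2 = e+1 from by omega, pb1 (e+1) (by omega), mul_zero]
      have t2 : ((-1:ℚ))^(e-2) * pbc (b 2 + 1) (e-2+2) = 0 := by
        rw [hb2, show ((2:ℚ)+1) = 3 from by norm_num, show e-2+2 = e from by omega,
          pb3 e (by omega), mul_zero]
      rw [t1, t2, zero_add, zero_add] at h
      have hterm : ∀ j ∈ Finset.Icc 3 e, (-1:ℚ)^(e-j) * pbc (b j + 1) (e-j+2)
          = (-1:ℚ)^(e-j) * ((((ℓ (j-3)).toNat + 1).choose (e-j+2) : ℕ) : ℚ) := by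
        intro j hj
        simp only [Finset.mem_Icc] at hj
        rw [IH j (by omega) (by omega), ← hLQ (j-3),
          show (((ℓ (j-3)).toNat : ℚ)) + 1 = ((((ℓ (j-3)).toNat + 1 : ℕ)) : ℚ) from by push_cast; ring,
          pbc_natCast]
      rw [Finset.sum_congr rfl hterm, ← Finset.Ico_add_one_right_eq_Icc, Finset.sum_Ico_eq_sum_range,
        show e+1-3 = e-2 from by omega] at h
      have hre : ∑ i ∈ Finset.range (e-2),
            (-1:ℚ)^(e-(3+i)) * ((((ℓ (3+i-3)).toNat + 1).choose (e-(3+i)+2) : ℕ) : ℚ)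
          = ∑ k ∈ Finset.range (e-2),
            (-1:ℚ)^k * ((((ℓ (e-3-k)).toNat + 1).choose (k+2) : ℕ) : ℚ) := by
        rw [← Finset.sum_range_reflect
          (fun k => (-1:ℚ)^k * ((((ℓ (e-3-k)).toNat + 1).choose (k+2) : ℕ) : ℚ)) (e-2)]
        apply Finset.sum_congr rfl
        intro i hi
        simp only [Finset.mem_range] at hi
        rw [show e-2-1-i = e-(3+i) from by omega, show e-3-(e-(3+i)) = 3+i-3 from by omega,
          show e-(3+i)+2 = e-(3+i)+2 from rfl]
      rw [hre] at h
      have hpascal : ∀ k ∈ Finset.range (e-2),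
          (-1:ℚ)^k * ((((ℓ (e-3-k)).toNat + 1).choose (k+2) : ℕ) : ℚ)
          = (-1:ℚ)^k * (((ℓ (e-3-k)).toNat.choose (k+2) : ℕ) : ℚ)
            + (-1:ℚ)^k * (((ℓ (e-3-k)).toNat.choose (k+1) : ℕ) : ℚ) := by
        intro k _
        rw [Nat.choose_succ_succ' ((ℓ (e-3-k)).toNat) (k+1)]
        push_cast
        ring
      rw [Finset.sum_congr rfl hpascal, Finset.sum_add_distrib] at h
      have hfst : ∑ k ∈ Finset.range (e-2), (-1:ℚ)^k * (((ℓ (e-3-k)).toNat.choose (k+2) : ℕ) : ℚ)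
          = ((ℓ (e-2) : ℤ) : ℚ) - 1 := by
        have hq := hrQ (e-3)
        rw [show e-3+1 = e-2 from by omega] at hq
        linarith [hq]
      have hsnd : ∑ k ∈ Finset.range (e-2), (-1:ℚ)^k * (((ℓ (e-3-k)).toNat.choose (k+1) : ℕ) : ℚ)
          = 1 := by
        have hq := hidQ (e-3) (by omega)
        rw [show e-3+1 = e-2 from by omega] at hq
        exact hq
      rw [hfst, hsnd] at h
      rw [show e+1-3 = e-2 from by omega, h]
      ring
  exact ⟨hb3, hb4, fun d hd => main d hd⟩
end

section
/- Define ℓ_n by ℓ_0 = 3 and ℓ_{n+1} = 1 + Σ_{j=0}^{n} (-1)^j · binom(ℓ_{n-j}, j+2), and extend by ℓ_{-3} = 0, ℓ_{-2} = 0, ℓ_{-1} = 2. Then for all d ≥ 4, the quantity Σ_{j=1}^{d} (-1)^(d-j) · C(ℓ_{j-3} + 1, d - j + 2) equals ℓ_{d-2}, where C is the polynomial binomial coefficient. -/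
open Finset

lemma pbc_natCast_s18 (n r : ℕ) : pbc (n : ℚ) r = (n.choose r : ℚ) := by
  have hprod : ∏ j ∈ Finset.range r, ((n : ℚ) - j) = (n.descFactorial r : ℚ) := by
    induction r with
    | zero => simp
    | succ r ih =>
      rw [Finset.prod_range_succ, ih, Nat.descFactorial_succ]
      rcases le_or_gt r n with h | h
      · push_cast [Nat.cast_sub h]
        ring
      · rw [Nat.descFactorial_of_lt h]
        simp
  unfold pbc
  rw [hprod, Nat.descFactorial_eq_factorial_mul_choose]
  push_cast
  rw [mul_comm, mul_div_assoc, div_self (by positivity), mul_one]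


lemma two_mul_choose_two (n : ℕ) : 2 * n.choose 2 = n * (n - 1) := by
  have h := Nat.descFactorial_eq_factorial_mul_choose n 2
  have h2 : n.descFactorial 2 = (n - 1) * n := by
    simp [Nat.descFactorial_succ, Nat.descFactorial_one]
  rw [show Nat.factorial 2 = 2 from rfl] at h
  rw [← h, h2, Nat.mul_comm]

lemma six_mul_choose_three (n : ℕ) : 6 * n.choose 3 = n * (n - 1) * (n - 2) := by
  have h := Nat.descFactorial_eq_factorial_mul_choose n 3
  have h2 : n.descFactorial 3 = (n - 2) * ((n - 1) * n) := by
    simp [Nat.descFactorial_succ, Nat.descFactorial_one]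
  rw [show Nat.factorial 3 = 6 from rfl] at h
  rw [← h, h2]; ring

lemma base2 (a b : ℕ) (hb : 3 ≤ b) (hsq : b ^ 2 ≤ 3 * a) : 2 * b.choose 3 ≤ a.choose 2 := by
  have key : 6 * (2 * b.choose 3) ≤ 6 * a.choose 2 := by
    have e1 : 6 * (2 * b.choose 3) = 2 * (b * (b-1) * (b-2)) := by
      rw [← six_mul_choose_three]; ring
    have e2 : 6 * a.choose 2 = 3 * (a * (a-1)) := by
      rw [← two_mul_choose_two]; ring
    rw [e1, e2]
    have hb' : (3:ℤ) ≤ (b:ℤ) := by exact_mod_cast hb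
    have ha : 3 ≤ a := by nlinarith
    have hsq' : ((b:ℤ))^2 ≤ 3 * a := by exact_mod_cast hsq
    have ha' : (3:ℤ) ≤ (a:ℤ) := by exact_mod_cast ha
    have goal' : 2 * ((b:ℤ) * (b-1) * (b-2)) ≤ 3 * ((a:ℤ) * (a-1)) := by
      nlinarith [mul_le_mul hsq' (by linarith : (b:ℤ)^2 - 3 ≤ 3*a - 3)
        (by nlinarith : (0:ℤ) ≤ (b:ℤ)^2 - 3) (by linarith : (0:ℤ) ≤ 3*(a:ℤ)),
        mul_nonneg (mul_nonneg (by linarith : (0:ℤ) ≤ (b:ℤ))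
          (by nlinarith : (0:ℤ) ≤ ((b:ℤ)-3)*((b:ℤ)-3))) (by linarith : (0:ℤ) ≤ (b:ℤ))]
    zify [show 1 ≤ b by omega, show 2 ≤ b by omega, show 1 ≤ a by omega]
    linarith
  omega

lemma choose_ratio (a b : ℕ) (hba : b ≤ a) (hbase : 2 * b.choose 3 ≤ a.choose 2) :
    ∀ k, 2 ≤ k → 2 * b.choose (k + 1) ≤ a.choose k := by
  intro k hk
  induction k, hk using Nat.le_induction with
  | base => exact hbase
  | succ k hk ih =>
    rcases lt_or_ge b (k + 2) with hb | hb
    · simp [Nat.choose_eq_zero_of_lt hb]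
    · have h1 := Nat.choose_succ_right_eq a k
      have h2 := Nat.choose_succ_right_eq b (k + 1)
      have key : 2 * b.choose (k + 2) * ((k+1)*(k+2)) ≤ a.choose (k + 1) * ((k+1)*(k+2)) := by
        calc 2 * b.choose (k + 2) * ((k+1)*(k+2))
            = 2 * (b.choose (k + 1 + 1) * (k + 1 + 1)) * (k+1) := by ring
          _ = 2 * (b.choose (k+1) * (b - (k+1))) * (k+1) := by rw [h2]
          _ = (2 * b.choose (k+1)) * ((b - (k+1)) * (k+1)) := by ring
          _ ≤ a.choose k * ((a - k) * (k+2)) := by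
              apply Nat.mul_le_mul ih
              apply Nat.mul_le_mul <;> omega
          _ = (a.choose k * (a - k)) * (k+2) := by ring
          _ = (a.choose (k+1) * (k+1)) * (k+2) := by rw [h1]
          _ = a.choose (k + 1) * ((k+1)*(k+2)) := by ring
      exact Nat.le_of_mul_le_mul_right key (by positivity)

lemma alt_decomp (n : ℕ) (t : ℕ → ℤ) :
    ∑ j ∈ range (n + 1), (-1) ^ j * t j = t 0 - ∑ j ∈ range n, (-1) ^ j * t (j + 1) := by
  rw [Finset.sum_range_succ']
  have : ∀ i ∈ range n, (-1:ℤ) ^ (i + 1) * t (i + 1) = -((-1) ^ i * t (i + 1)) := by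
    intro i _; ring
  rw [Finset.sum_congr rfl this, Finset.sum_neg_distrib]
  ring

lemma alt_bounds : ∀ (n : ℕ) (t : ℕ → ℤ), (∀ j, j + 1 < n → t (j + 1) ≤ t j) →
    (∀ j, j < n → 0 ≤ t j) →
    0 ≤ ∑ j ∈ range n, (-1) ^ j * t j ∧ (0 < n → ∑ j ∈ range n, (-1) ^ j * t j ≤ t 0) := by
  intro n
  induction n with
  | zero => intro t _ _; simp
  | succ n ih =>
    intro t hdec hnn
    obtain ⟨h1, h2⟩ := ih (fun j => t (j + 1)) (fun j hj => hdec (j + 1) (by omega))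
      (fun j hj => hnn (j + 1) (by omega))
    rw [alt_decomp]
    constructor
    · rcases Nat.eq_zero_or_pos n with h | h
      · subst h; simpa using hnn 0 (by omega)
      · have := h2 h
        have ht10 : t 1 ≤ t 0 := hdec 0 (by omega)
        linarith
    · intro _; linarith

lemma alt_lower (n : ℕ) (t : ℕ → ℤ) (hdec : ∀ j, j + 1 < n + 1 → t (j + 1) ≤ t j)
    (hnn : ∀ j, j < n + 1 → 0 ≤ t j) (hn : 0 < n) :
    t 0 - t 1 ≤ ∑ j ∈ range (n + 1), (-1) ^ j * t j := by
  obtain ⟨h1, h2⟩ := alt_bounds n (fun j => t (j + 1)) (fun j hj => hdec (j + 1) (by omega))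
    (fun j hj => hnn (j + 1) (by omega))
  rw [alt_decomp]
  have := h2 hn
  linarith

set_option maxHeartbeats 1600000 in
lemma ell_growth (ℓ : ℤ → ℤ) (h0 : ℓ 0 = 3)
    (hrec : ∀ n : ℕ, ℓ (n + 1) =
      1 + ∑ j ∈ Finset.range (n + 1), (-1) ^ j * ((ℓ ((n : ℤ) - j)).toNat.choose (j + 2) : ℤ)) :
    ∀ m : ℕ, 0 ≤ ℓ m ∧ 0 ≤ ℓ (m + 1 : ℕ) ∧ 3 ≤ (ℓ m).toNat ∧
      (ℓ m).toNat ≤ (ℓ (m + 1 : ℕ)).toNat ∧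
      ((ℓ m).toNat) ^ 2 ≤ 3 * (ℓ (m + 1 : ℕ)).toNat ∧ (3 ≤ m → 12 ≤ (ℓ m).toNat) := by
  have e1 : ℓ 1 = 4 := by
    have h := hrec 0
    norm_num [Finset.sum_range_succ, h0] at h
    exact h
  have e2 : ℓ 2 = 6 := by
    have h := hrec 1
    norm_num [Finset.sum_range_succ, h0, e1, show (1:ℤ)-1 = 0 by ring] at h
    exact h
  have e3 : ℓ 3 = 12 := by
    have h := hrec 2
    norm_num [Finset.sum_range_succ, h0, e1, e2, show (2:ℤ)-1 = 1 by ring,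
      show (2:ℤ)-2 = 0 by ring] at h
    exact h
  have e4 : ℓ 4 = 48 := by
    have h := hrec 3
    norm_num [Finset.sum_range_succ, h0, e1, e2, e3, show (3:ℤ)-1 = 2 by ring,
      show (3:ℤ)-2 = 1 by ring, show (3:ℤ)-3 = 0 by ring] at h
    exact h
  intro m
  induction m using Nat.strong_induction_on with
  | _ m IH =>
    match m with
    | 0 => norm_num [h0, e1]; decide
    | 1 => norm_num [e1, e2]; decide
    | 2 => norm_num [e2, e3]; decide
    | 3 => norm_num [e3, e4]; decide
    | (m + 4) =>
      -- general step
      have e34 : m + 3 + 1 = m + 4 := by omega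
      obtain ⟨q1, q2, q3, q4, q5, q6⟩ := IH (m + 3) (by omega)
      rw [e34] at q2 q4 q5
      have hq6 : 12 ≤ (ℓ (m + 3 : ℕ)).toNat := q6 (by omega)
      -- the sequence of terms
      set t : ℕ → ℤ := fun j => (((ℓ ((m + 4 - j : ℕ) : ℤ)).toNat.choose (j + 2) : ℤ)) with htdef
      have hnn : ∀ j, j < m + 4 + 1 → 0 ≤ t j := by
        intro j _; simp only [htdef]; positivity
      have hdec2 : ∀ j, j + 1 < m + 4 + 1 → 2 * t (j + 1) ≤ t j := by
        intro j hj
        have ea : m + 4 - j = (m + 3 - j) + 1 := by omega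
        have eb : m + 4 - (j + 1) = m + 3 - j := by omega
        obtain ⟨_, _, p3, p4, p5, _⟩ := IH (m + 3 - j) (by omega)
        have hbase := base2 _ _ p3 p5
        have hcr := choose_ratio _ _ p4 hbase (j + 2) (by omega)
        simp only [htdef]
        rw [eb, ea, show j + 1 + 2 = j + 2 + 1 by omega]
        exact_mod_cast hcr
      have hdec : ∀ j, j + 1 < m + 4 + 1 → t (j + 1) ≤ t j := by
        intro j hj
        have := hdec2 j hj
        have h2 := hnn (j + 1) (by omega)
        linarith
      -- the recurrence at n = m+4
      have h := hrec (m + 4)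
      have hsum : ∀ j ∈ range (m + 4 + 1),
          (-1:ℤ) ^ j * (((ℓ (((m + 4 : ℕ) : ℤ) - j)).toNat.choose (j + 2) : ℤ)) = (-1) ^ j * t j := by
        intro j hj
        simp only [mem_range] at hj
        have : (((m + 4 : ℕ) : ℤ)) - (j : ℤ) = (((m + 4 - j : ℕ)) : ℤ) := by
          push_cast; omega
        rw [this]
      rw [Finset.sum_congr rfl hsum] at h
      have hcast : ((m + 4 : ℕ) : ℤ) + 1 = ((m + 4 + 1 : ℕ) : ℤ) := by push_cast; ring
      rw [hcast] at h
      -- bounds on the alternating sum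
      have hub := (alt_bounds (m + 4 + 1) t hdec hnn).2 (by omega)
      have hlow := alt_lower (m + 4) t hdec hnn (by omega)
      have h21 := hdec2 0 (by omega)
      norm_num at h21
      -- values of t 0 and t 1
      have ht0 : t 0 = (((ℓ ((m + 4 : ℕ) : ℤ)).toNat.choose 2 : ℤ)) := by
        simp only [htdef]; norm_num
      have ht1 : t 1 = (((ℓ ((m + 3 : ℕ) : ℤ)).toNat.choose 3 : ℤ)) := by
        simp only [htdef]
        rw [show m + 4 - 1 = m + 3 by omega]
      have hl1 : t 0 - t 1 + 1 ≤ ℓ ((m + 4 + 1 : ℕ) : ℤ) := by rw [h]; linarith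
      have hu1 : ℓ ((m + 4 + 1 : ℕ) : ℤ) ≤ 1 + t 0 := by rw [h]; linarith
      clear h hub hlow hsum hdec hnn hdec2
      rw [ht0, ht1] at hl1 h21
      rw [ht0] at hu1
      clear ht0 ht1
      clear_value t
      clear t htdef
      -- nonnegativity of ℓ (m+5)
      have hLpos : 0 ≤ ℓ ((m + 4 + 1 : ℕ) : ℤ) := by
        have : (0:ℤ) ≤ ((ℓ ((m + 3:ℕ) : ℤ)).toNat.choose 3 : ℤ) := by positivity
        linarith
      set B := (ℓ ((m + 4 : ℕ) : ℤ)).toNat with hBdef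
      set C := (ℓ ((m + 3 : ℕ) : ℤ)).toNat with hCdef
      set N := (ℓ ((m + 4 + 1 : ℕ) : ℤ)).toNat with hNdef
      have hNL : (N : ℤ) = ℓ ((m + 4 + 1 : ℕ) : ℤ) := Int.toNat_of_nonneg hLpos
      rw [← hNL] at hl1 hu1
      have hb12 : 12 ≤ B := le_trans hq6 q4
      have hcb : C ≤ B := q4
      have hsq : C ^ 2 ≤ 3 * B := q5
      clear_value B C N
      -- integer identities for the binomials
      have h2t0 : 2 * ((B.choose 2 : ℕ) : ℤ) = (B : ℤ) * ((B : ℤ) - 1) := by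
        have h1 : 1 ≤ B := by omega
        have := two_mul_choose_two B
        have hcast : ((2 * B.choose 2 : ℕ) : ℤ) = ((B * (B - 1) : ℕ) : ℤ) := by
          exact_mod_cast congrArg (fun x : ℕ => (x : ℤ)) this
        push_cast [Nat.cast_sub h1] at hcast
        linarith
      have h6t1 : 6 * ((C.choose 3 : ℕ) : ℤ) = (C : ℤ) * ((C : ℤ) - 1) * ((C : ℤ) - 2) := by
        have h1 : 1 ≤ C := by omega
        have h2 : 2 ≤ C := by omega
        have := six_mul_choose_three C
        have hcast : ((6 * C.choose 3 : ℕ) : ℤ) = ((C * (C - 1) * (C - 2) : ℕ) : ℤ) := by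
          exact_mod_cast congrArg (fun x : ℕ => (x : ℤ)) this
        push_cast [Nat.cast_sub h1, Nat.cast_sub h2] at hcast
        linarith
      have hc12 : (12 : ℤ) ≤ (C : ℤ) := by exact_mod_cast hq6
      have hb12' : (12 : ℤ) ≤ (B : ℤ) := by exact_mod_cast hb12
      have hcb' : (C : ℤ) ≤ (B : ℤ) := by exact_mod_cast hcb
      have hsq' : (C : ℤ) ^ 2 ≤ 3 * (B : ℤ) := by exact_mod_cast hsq
      have hc0 : (0:ℤ) ≤ (C:ℤ) := by linarith
      have hb0 : (0:ℤ) ≤ (B:ℤ) := by linarith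
      refine ⟨?_, ?_, ?_, ?_, ?_, ?_⟩
      · exact q2
      · exact hLpos
      · omega
      · -- B ≤ N
        have key : 4 + (B:ℤ) * ((B:ℤ) - 1) ≤ 4 * (N : ℤ) := by linarith
        have hmul : (0:ℤ) ≤ ((B:ℤ) - 1) * ((B:ℤ) - 4) := by
          apply mul_nonneg <;> linarith
        have : (B : ℤ) ≤ (N : ℤ) := by nlinarith [key, hmul]
        exact_mod_cast this
      · -- B^2 ≤ 3*N
        have key : 6 + 3 * ((B:ℤ) * ((B:ℤ)-1)) - (C:ℤ)*((C:ℤ)-1)*((C:ℤ)-2) ≤ 6 * (N:ℤ) := by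
          linarith
        have m0 : 12 * (C:ℤ) ≤ (C:ℤ) ^ 2 := by nlinarith [hc12, hc0]
        have m2 : 4 * (C:ℤ) ≤ (B:ℤ) := by linarith
        have m1 : (C:ℤ) * (C:ℤ) ^ 2 ≤ (C:ℤ) * (3 * (B:ℤ)) :=
          mul_le_mul_of_nonneg_left hsq' hc0
        have m4 : 4 * (C:ℤ) * (B:ℤ) ≤ (B:ℤ) * (B:ℤ) := by
          have := mul_le_mul_of_nonneg_right m2 hb0
          linarith
        have m5 : 12 * (B:ℤ) ≤ (C:ℤ) * (B:ℤ) := by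
          have := mul_le_mul_of_nonneg_right hc12 hb0
          linarith
        have goal' : (B:ℤ)^2 ≤ 3 * (N:ℤ) := by nlinarith [key, m0, m1, m4, m5]
        exact_mod_cast goal'
      · intro _; exact hb12

theorem alt_sum_eq_ell (ℓ : ℤ → ℤ)
    (hm3 : ℓ (-3) = 0) (hm2 : ℓ (-2) = 0) (hm1 : ℓ (-1) = 2) (h0 : ℓ 0 = 3)
    (hrec : ∀ n : ℕ, ℓ (n + 1) =
      1 + ∑ j ∈ Finset.range (n + 1), (-1) ^ j * ((ℓ ((n : ℤ) - j)).toNat.choose (j + 2) : ℤ))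
    (d : ℕ) (hd : 4 ≤ d) :
    ∑ j ∈ Finset.Icc 1 d, (-1) ^ (d - j) * pbc ((ℓ ((j : ℤ) - 3) : ℚ) + 1) (d - j + 2) =
      (ℓ ((d : ℤ) - 2) : ℚ) := by
  obtain ⟨e, rfl⟩ : ∃ e, d = e + 4 := ⟨d - 4, by omega⟩
  clear hd
  have hnonneg : ∀ r : ℕ, 0 ≤ ℓ r := fun r => (ell_growth ℓ h0 hrec r).1
  have hAcast : ∀ r : ℕ, (((ℓ (r : ℤ)).toNat : ℤ)) = ℓ r := fun r =>
    Int.toNat_of_nonneg (hnonneg r)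
  -- Step 1: reindex the sum by k = d - j
  have step1 : (∑ j ∈ Finset.Icc 1 (e + 4),
        (-1 : ℚ) ^ (e + 4 - j) * pbc ((ℓ ((j : ℤ) - 3) : ℚ) + 1) (e + 4 - j + 2))
      = ∑ k ∈ Finset.range (e + 4),
        (-1 : ℚ) ^ k * pbc ((ℓ (((e + 4 : ℕ) : ℤ) - k - 3) : ℚ) + 1) (k + 2) := by
    refine Finset.sum_nbij' (fun j => e + 4 - j) (fun k => e + 4 - k) ?_ ?_ ?_ ?_ ?_
    · intro a ha; simp only [Finset.mem_Icc] at ha; simp only [Finset.mem_range]; omega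
    · intro a ha; simp only [Finset.mem_range] at ha; simp only [Finset.mem_Icc]; omega
    · intro a ha; simp only [Finset.mem_Icc] at ha
      show e + 4 - (e + 4 - a) = a; omega
    · intro a ha; simp only [Finset.mem_range] at ha
      show e + 4 - (e + 4 - a) = a; omega
    · intro a ha
      simp only [Finset.mem_Icc] at ha
      show (-1 : ℚ) ^ (e + 4 - a) * pbc ((ℓ ((a : ℤ) - 3) : ℚ) + 1) (e + 4 - a + 2)
        = (-1 : ℚ) ^ (e + 4 - a) * pbc ((ℓ (((e + 4 : ℕ) : ℤ) - ((e + 4 - a : ℕ) : ℤ) - 3) : ℚ) + 1)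
          (e + 4 - a + 2)
      have h3 : (((e + 4 : ℕ) : ℤ)) - ((e + 4 - a : ℕ) : ℤ) - 3 = (a : ℤ) - 3 := by
        push_cast [Nat.cast_sub (by omega : a ≤ e + 4)]
        ring
      rw [h3]
  rw [step1]
  set F : ℕ → ℚ := fun k =>
    (-1 : ℚ) ^ k * pbc ((ℓ (((e + 4 : ℕ) : ℤ) - k - 3) : ℚ) + 1) (k + 2) with hF
  -- split off the top two terms (k = e+2 and k = e+3), which vanish
  have hsplit : ∑ k ∈ Finset.range (e + 4), F k
      = ∑ k ∈ Finset.range (e + 2), F k + F (e + 2) + F (e + 3) := by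
    rw [show e + 4 = e + 2 + 1 + 1 by omega, Finset.sum_range_succ, Finset.sum_range_succ]
  have hF3 : F (e + 3) = 0 := by
    rw [hF]
    show (-1 : ℚ) ^ (e + 3) * pbc ((ℓ (((e + 4 : ℕ) : ℤ) - ((e + 3 : ℕ) : ℤ) - 3) : ℚ) + 1)
      (e + 3 + 2) = 0
    have h1 : (((e + 4 : ℕ) : ℤ)) - ((e + 3 : ℕ) : ℤ) - 3 = -2 := by push_cast; ring
    rw [h1, hm2]
    rw [show ((0 : ℤ) : ℚ) + 1 = ((1 : ℕ) : ℚ) by norm_num, pbc_natCast_s18]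
    rw [Nat.choose_eq_zero_of_lt (by omega)]
    norm_num
  have hF2 : F (e + 2) = 0 := by
    rw [hF]
    show (-1 : ℚ) ^ (e + 2) * pbc ((ℓ (((e + 4 : ℕ) : ℤ) - ((e + 2 : ℕ) : ℤ) - 3) : ℚ) + 1)
      (e + 2 + 2) = 0
    have h1 : (((e + 4 : ℕ) : ℤ)) - ((e + 2 : ℕ) : ℤ) - 3 = -1 := by push_cast; ring
    rw [h1, hm1]
    rw [show ((2 : ℤ) : ℚ) + 1 = ((3 : ℕ) : ℚ) by norm_num, pbc_natCast_s18]
    rw [Nat.choose_eq_zero_of_lt (by omega)]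
    norm_num
  rw [hsplit, hF3, hF2, add_zero, add_zero]
  -- rewrite each remaining term using Pascal's rule
  have hterm : ∀ k ∈ Finset.range (e + 2), F k
      = (-1 : ℚ) ^ k * (((ℓ ((e + 1 - k : ℕ) : ℤ)).toNat.choose (k + 1) : ℚ))
        + (-1 : ℚ) ^ k * (((ℓ ((e + 1 - k : ℕ) : ℤ)).toNat.choose (k + 2) : ℚ)) := by
    intro k hk
    simp only [Finset.mem_range] at hk
    rw [hF]
    show (-1 : ℚ) ^ k * pbc ((ℓ (((e + 4 : ℕ) : ℤ) - (k : ℤ) - 3) : ℚ) + 1) (k + 2) = _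
    have h1 : (((e + 4 : ℕ) : ℤ)) - (k : ℤ) - 3 = ((e + 1 - k : ℕ) : ℤ) := by
      push_cast [Nat.cast_sub (by omega : k ≤ e + 1)]
      ring
    rw [h1]
    have h2 : (ℓ ((e + 1 - k : ℕ) : ℤ) : ℚ) + 1
        = (((ℓ ((e + 1 - k : ℕ) : ℤ)).toNat + 1 : ℕ) : ℚ) := by
      have h2' : (((ℓ ((e + 1 - k : ℕ) : ℤ)).toNat : ℚ)) = (ℓ ((e + 1 - k : ℕ) : ℤ) : ℚ) := by
        exact_mod_cast congrArg (fun z : ℤ => (z : ℚ)) (hAcast (e + 1 - k))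
      push_cast
      rw [h2']
    rw [h2, pbc_natCast_s18]
    rw [show k + 2 = k + 1 + 1 from rfl, Nat.choose_succ_succ]
    push_cast
    ring
  rw [Finset.sum_congr rfl hterm, Finset.sum_add_distrib]
  -- the second sum equals ℓ(e+2) - 1 by the recurrence
  have hX : ∑ k ∈ Finset.range (e + 2),
      (-1 : ℚ) ^ k * (((ℓ ((e + 1 - k : ℕ) : ℤ)).toNat.choose (k + 2) : ℚ))
      = (ℓ ((e + 2 : ℕ) : ℤ) : ℚ) - 1 := by
    have h := hrec (e + 1)
    have hcast : ((e + 1 : ℕ) : ℤ) + 1 = ((e + 2 : ℕ) : ℤ) := by push_cast; ring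
    rw [hcast, show e + 1 + 1 = e + 2 by omega] at h
    have hs : ∀ j ∈ Finset.range (e + 2),
        (-1 : ℤ) ^ j * ((ℓ (((e + 1 : ℕ) : ℤ) - (j : ℤ))).toNat.choose (j + 2) : ℤ)
        = (-1 : ℤ) ^ j * ((ℓ ((e + 1 - j : ℕ) : ℤ)).toNat.choose (j + 2) : ℤ) := by
      intro j hj
      simp only [Finset.mem_range] at hj
      have : ((e + 1 : ℕ) : ℤ) - (j : ℤ) = ((e + 1 - j : ℕ) : ℤ) := by
        push_cast [Nat.cast_sub (by omega : j ≤ e + 1)]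
        ring
      rw [this]
    rw [Finset.sum_congr rfl hs] at h
    have h' := congrArg (fun z : ℤ => (z : ℚ)) h
    push_cast at h'
    rw [show ((e : ℤ) + 2) = ((e + 2 : ℕ) : ℤ) by push_cast; ring] at h'
    linarith [h']
  -- the first sum equals 1
  have hY : ∑ k ∈ Finset.range (e + 2),
      (-1 : ℚ) ^ k * (((ℓ ((e + 1 - k : ℕ) : ℤ)).toNat.choose (k + 1) : ℚ)) = 1 := by
    rw [show e + 2 = e + 1 + 1 by omega, Finset.sum_range_succ']
    have hs : ∀ k ∈ Finset.range (e + 1),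
        (-1 : ℚ) ^ (k + 1) * (((ℓ ((e + 1 - (k + 1) : ℕ) : ℤ)).toNat.choose (k + 1 + 1) : ℚ))
        = -((-1 : ℚ) ^ k * (((ℓ ((e - k : ℕ) : ℤ)).toNat.choose (k + 2) : ℚ))) := by
      intro k hk
      simp only [Finset.mem_range] at hk
      rw [show e + 1 - (k + 1) = e - k by omega, show k + 1 + 1 = k + 2 by omega]
      ring
    rw [Finset.sum_congr rfl hs, Finset.sum_neg_distrib]
    have h := hrec e
    have hcast : ((e : ℕ) : ℤ) + 1 = ((e + 1 : ℕ) : ℤ) := by push_cast; ring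
    rw [hcast] at h
    have hs2 : ∀ j ∈ Finset.range (e + 1),
        (-1 : ℤ) ^ j * ((ℓ (((e : ℕ) : ℤ) - (j : ℤ))).toNat.choose (j + 2) : ℤ)
        = (-1 : ℤ) ^ j * ((ℓ ((e - j : ℕ) : ℤ)).toNat.choose (j + 2) : ℤ) := by
      intro j hj
      simp only [Finset.mem_range] at hj
      have : ((e : ℕ) : ℤ) - (j : ℤ) = ((e - j : ℕ) : ℤ) := by
        push_cast [Nat.cast_sub (by omega : j ≤ e)]
        ring
      rw [this]
    rw [Finset.sum_congr rfl hs2] at h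
    have h' := congrArg (fun z : ℤ => (z : ℚ)) h
    push_cast at h'
    rw [show ((e : ℤ) + 1) = ((e + 1 : ℕ) : ℤ) by push_cast; ring] at h'
    -- first term: (-1)^0 * choose (A (e+1-0)) 1 = A (e+1)
    have hz : (-1 : ℚ) ^ 0 * (((ℓ ((e + 1 - 0 : ℕ) : ℤ)).toNat.choose (0 + 1) : ℚ))
        = ((ℓ ((e + 1 : ℕ) : ℤ)).toNat : ℚ) := by
      norm_num
    rw [hz]
    have hA : ((ℓ ((e + 1 : ℕ) : ℤ)).toNat : ℚ) = (ℓ ((e + 1 : ℕ) : ℤ) : ℚ) := by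
      exact_mod_cast congrArg (fun z : ℤ => (z : ℚ)) (hAcast (e + 1))
    rw [hA]
    linarith [h']
  rw [hX, hY]
  have hR : (((e + 4 : ℕ) : ℤ)) - 2 = ((e + 2 : ℕ) : ℤ) := by push_cast; ring
  rw [hR]
  ring
end

section
/- Define ℓ_n by ℓ_0 = 3 and ℓ_{n+1} = 1 + Σ_{j=0}^{n} (-1)^j · binom(ℓ_{n-j}, j+2). Then for all n ≥ 0, 1 + binom(ℓ_n, 2) - binom(ℓ_{n-1}, 3) ≤ ℓ_{n+1} ≤ 1 + binom(ℓ_n, 2), where the term binom(ℓ_{n-1}, 3) is interpreted as 0 when n = 0. -/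
lemma alt_sum_bounds (a : ℕ → ℤ) (ha : ∀ j, 0 ≤ a j) :
    ∀ n : ℕ, (∀ j, j + 1 < n → a (j + 1) ≤ a j) →
      0 ≤ ∑ j ∈ Finset.range n, (-1) ^ j * a j ∧
        ∑ j ∈ Finset.range n, (-1) ^ j * a j ≤ a 0 := by
  intro n
  induction n generalizing a with
  | zero => intro _; simpa using ha 0
  | succ n ih =>
    intro hm
    have peel : ∑ j ∈ Finset.range (n + 1), (-1) ^ j * a j
        = a 0 - ∑ i ∈ Finset.range n, (-1) ^ i * a (i + 1) := by
      rw [Finset.sum_range_succ']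
      have : ∀ i, (-1 : ℤ) ^ (i + 1) * a (i + 1) = -((-1) ^ i * a (i + 1)) := by
        intro i; ring
      simp [this, Finset.sum_neg_distrib]
      ring
    have hb := ih (fun i => a (i + 1)) (fun j => ha (j + 1))
      (fun j hj => hm (j + 1) (by omega))
    rcases hb with ⟨hb0, hb1⟩
    constructor
    · rcases Nat.eq_zero_or_pos n with h | h
      · subst h; simp at hb0 ⊢; simpa using ha 0
      · have h10 : a 1 ≤ a 0 := hm 0 (by omega)
        rw [peel]; linarith
    · rw [peel]; linarith

lemma choose_step (n M : ℕ) (h3 : n * (n - 1) ≤ 3 * M) :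
    ∀ k : ℕ, 2 ≤ k → n.choose (k + 1) ≤ M.choose k := by
  have hM : 3 ≤ n → n - 1 ≤ M := by
    intro hn
    nlinarith [Nat.sub_le n 1]
  intro k hk
  induction k with
  | zero => omega
  | succ k ih =>
    rcases Nat.lt_or_ge n (k + 2) with hn | hn
    · simp [Nat.choose_eq_zero_of_lt hn]
    · -- n ≥ k+2 ≥ 3 (since k ≥ 1)
      have hn3 : 3 ≤ n := by omega
      have hMn : n - 1 ≤ M := hM hn3
      rcases Nat.lt_or_ge k 2 with hk2 | hk2
      · -- k = 1, so goal: choose n 3 ≤ choose M 2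
        have hk1 : k = 1 := by omega
        subst hk1
        show n.choose 3 ≤ M.choose 2
        · -- choose n 3 * 6 = n(n-1)(n-2), choose M 2 * 2 = M(M-1)
          have e1 : n.choose 2 * 2 = n * (n - 1) := by
            rw [Nat.choose_succ_right_eq n 1, Nat.choose_one_right]
          have e2 : n.choose 3 * 3 = n.choose 2 * (n - 2) := by
            rw [Nat.choose_succ_right_eq n 2]
          have e3 : M.choose 2 * 2 = M * (M - 1) := by
            rw [Nat.choose_succ_right_eq M 1, Nat.choose_one_right]
          have key : n.choose 3 * 6 ≤ M.choose 2 * 6 := by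
            have h6 : n.choose 3 * 6 = n * (n - 1) * (n - 2) := by
              calc n.choose 3 * 6 = (n.choose 3 * 3) * 2 := by ring
                _ = (n.choose 2 * (n - 2)) * 2 := by rw [e2]
                _ = (n.choose 2 * 2) * (n - 2) := by ring
                _ = n * (n - 1) * (n - 2) := by rw [e1]
            have h2' : M.choose 2 * 6 = (M * (M - 1)) * 3 := by
              calc M.choose 2 * 6 = (M.choose 2 * 2) * 3 := by ring
                _ = (M * (M - 1)) * 3 := by rw [e3]
            rw [h6, h2']
            calc n * (n - 1) * (n - 2) ≤ (3 * M) * (M - 1) := by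
                  apply Nat.mul_le_mul h3; omega
              _ = M * (M - 1) * 3 := by ring
          omega
      · -- k ≥ 2, use ih
        have ihk := ih hk2
        have e1 : n.choose (k + 2) * (k + 2) = n.choose (k + 1) * (n - (k + 1)) :=
          Nat.choose_succ_right_eq n (k + 1)
        have e2 : M.choose (k + 1) * (k + 1) = M.choose k * (M - k) :=
          Nat.choose_succ_right_eq M k
        have key : n.choose (k + 2) * (k + 2) ≤ M.choose (k + 1) * (k + 2) := by
          calc n.choose (k + 2) * (k + 2) = n.choose (k + 1) * (n - (k + 1)) := e1
            _ ≤ M.choose k * (M - k) := Nat.mul_le_mul ihk (by omega)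
            _ = M.choose (k + 1) * (k + 1) := e2.symm
            _ ≤ M.choose (k + 1) * (k + 2) := Nat.mul_le_mul_left _ (by omega)
        exact Nat.le_of_mul_le_mul_right key (by omega)

lemma bounds_aux (ℓ : ℕ → ℤ)
    (hrec : ∀ n : ℕ, ℓ (n + 1) =
      1 + ∑ j ∈ Finset.range (n + 1), (-1) ^ j * ((ℓ (n - j)).toNat.choose (j + 2) : ℤ))
    (n : ℕ)
    (hloc : ∀ m, m < n → (ℓ m).toNat * ((ℓ m).toNat - 1) ≤ 3 * (ℓ (m + 1)).toNat) :
    1 + ((ℓ n).toNat.choose 2 : ℤ) -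
        (if n = 0 then 0 else ((ℓ (n - 1)).toNat.choose 3 : ℤ)) ≤ ℓ (n + 1) ∧
      ℓ (n + 1) ≤ 1 + ((ℓ n).toNat.choose 2 : ℤ) := by
  set a : ℕ → ℤ := fun j => ((ℓ (n - j)).toNat.choose (j + 2) : ℤ) with ha_def
  have ha : ∀ j, 0 ≤ a j := fun j => Int.natCast_nonneg _
  have peel : ℓ (n + 1) = 1 + a 0 - ∑ i ∈ Finset.range n, (-1) ^ i * a (i + 1) := by
    rw [hrec n, Finset.sum_range_succ']
    change 1 + (∑ i ∈ Finset.range n, (-1 : ℤ) ^ (i + 1) * a (i + 1) + (-1) ^ 0 * a 0) = _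
    have : ∀ i, (-1 : ℤ) ^ (i + 1) * a (i + 1) = -((-1) ^ i * a (i + 1)) := by
      intro i; ring
    simp only [this, Finset.sum_neg_distrib, pow_zero, one_mul]
    ring
  have hmono : ∀ j, j + 1 < n → a (j + 1 + 1) ≤ a (j + 1) := by
    intro j hj
    have hm : n - j - 2 < n := by omega
    have h1 : n - (j + 1 + 1) = n - j - 2 := by omega
    have h2 : n - (j + 1) = (n - j - 2) + 1 := by omega
    have := choose_step _ _ (hloc (n - j - 2) hm) (j + 3) (by omega)
    simp only [ha_def, h1, h2]
    exact_mod_cast this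
  obtain ⟨hT0, hT1⟩ := alt_sum_bounds (fun i => a (i + 1)) (fun j => ha (j + 1)) n hmono
  have ha0 : a 0 = ((ℓ n).toNat.choose 2 : ℤ) := by simp [ha_def]
  constructor
  · rcases Nat.eq_zero_or_pos n with h | h
    · subst h
      simp only [if_pos rfl]
      rw [peel]
      simp [ha0]
    · rw [if_neg (by omega), peel, ha0]
      have : ((ℓ (n - 1)).toNat.choose 3 : ℤ) = a 1 := by
        simp [ha_def]
      rw [this]
      linarith
  · rw [peel, ha0]; linarith
lemma nat_inv_of (ℓ : ℕ → ℤ) (m : ℕ) (h3 : 3 ≤ ℓ m)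
    (hinv : 7 * ℓ m * (ℓ m - 1) ≤ 20 * ℓ (m + 1)) :
    (ℓ m).toNat * ((ℓ m).toNat - 1) ≤ 3 * (ℓ (m + 1)).toNat := by
  have hx : (0:ℤ) ≤ ℓ (m + 1) := by nlinarith
  have hA : ((ℓ m).toNat : ℤ) = ℓ m := Int.toNat_of_nonneg (by linarith)
  have hX : ((ℓ (m + 1)).toNat : ℤ) = ℓ (m + 1) := Int.toNat_of_nonneg hx
  have hA1 : 1 ≤ (ℓ m).toNat := by omega
  zify [hA1]
  rw [hA, hX]
  nlinarith
  
lemma inv_core (a b x c2 c3 : ℤ) (hb : 12 ≤ b) (hba : 7 * b * (b - 1) ≤ 20 * a)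
    (hx : 1 + c2 - c3 ≤ x) (e2 : c2 * 2 = a * (a - 1)) (e3 : c3 * 6 = b * (b - 1) * (b - 2)) :
    7 * a * (a - 1) ≤ 20 * x := by
  have hBnn : (0:ℤ) ≤ b * (b - 1) := by nlinarith
  have h5a : (0:ℤ) ≤ 20 * a - 7 * (b * (b - 1)) := by linarith
  have h5b : (0:ℤ) ≤ 20 * a + 7 * (b * (b - 1)) - 20 := by nlinarith
  have n1 := mul_nonneg h5a h5b
  have hc : (0:ℤ) ≤ 441 * (b * (b - 1)) - 1260 - 4000 * (b - 2) := by nlinarith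
  have n2 := mul_nonneg hc hBnn
  nlinarith [n1, n2]

lemma ell_main (ℓ : ℕ → ℤ) (h0 : ℓ 0 = 3)
    (hrec : ∀ n : ℕ, ℓ (n + 1) =
      1 + ∑ j ∈ Finset.range (n + 1), (-1) ^ j * ((ℓ (n - j)).toNat.choose (j + 2) : ℤ)) :
    ∀ n : ℕ, 3 ≤ ℓ n ∧ 7 * ℓ n * (ℓ n - 1) ≤ 20 * ℓ (n + 1) ∧ (3 ≤ n → 12 ≤ ℓ n) := by
  have h1 : ℓ 1 = 4 := by rw [hrec 0]; simp [h0]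
  have h2 : ℓ 2 = 6 := by
    rw [hrec 1, Finset.sum_range_succ, Finset.sum_range_one]
    norm_num [h0, h1]
    decide
  have h3 : ℓ 3 = 12 := by
    rw [hrec 2, Finset.sum_range_succ, Finset.sum_range_succ, Finset.sum_range_one]
    norm_num [h0, h1, h2]
    decide
  have h4 : ℓ 4 = 48 := by
    rw [hrec 3, Finset.sum_range_succ, Finset.sum_range_succ, Finset.sum_range_succ,
      Finset.sum_range_one]
    norm_num [h0, h1, h2, h3]
    decide
  intro n
  induction n using Nat.strong_induction_on with
  | _ n ih =>
    rcases Nat.lt_or_ge n 4 with hn | hn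
    · interval_cases n
      · refine ⟨by rw [h0], ?_, by omega⟩
        rw [h0, h1]; norm_num
      · refine ⟨by rw [h1]; norm_num, ?_, by omega⟩
        rw [h1, h2]; norm_num
      · refine ⟨by rw [h2]; norm_num, ?_, by omega⟩
        rw [h2, h3]; norm_num
      · refine ⟨by rw [h3]; norm_num, ?_, by norm_num [h3]⟩
        rw [h3, h4]; norm_num
    · -- n ≥ 4
      have hloc : ∀ m, m < n → (ℓ m).toNat * ((ℓ m).toNat - 1) ≤ 3 * (ℓ (m + 1)).toNat := by
        intro m hm
        obtain ⟨hm3, hminv, _⟩ := ih m hm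
        exact nat_inv_of ℓ m hm3 hminv
      obtain ⟨hlow, _⟩ := bounds_aux ℓ hrec n hloc
      obtain ⟨hp3, hpinv, hp12⟩ := ih (n - 1) (by omega)
      have hb12 : 12 ≤ ℓ (n - 1) := hp12 (by omega)
      have hpinv' : 7 * ℓ (n - 1) * (ℓ (n - 1) - 1) ≤ 20 * ℓ n := by
        have : n - 1 + 1 = n := by omega
        rwa [this] at hpinv
      have ha12 : 12 ≤ ℓ n := by nlinarith
      refine ⟨by linarith, ?_, fun _ => ha12⟩
      -- invariant at n
      rw [if_neg (by omega)] at hlow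
      set A := (ℓ n).toNat with hA_def
      set B := (ℓ (n - 1)).toNat with hB_def
      have hA : (A : ℤ) = ℓ n := Int.toNat_of_nonneg (by linarith)
      have hB : (B : ℤ) = ℓ (n - 1) := Int.toNat_of_nonneg (by linarith)
      have hA12 : 12 ≤ A := by omega
      have hB12 : 12 ≤ B := by omega
      have e2n : A.choose 2 * 2 = A * (A - 1) := by
        rw [Nat.choose_succ_right_eq A 1, Nat.choose_one_right]
      have e3n : B.choose 3 * 6 = B * (B - 1) * (B - 2) := by
        have t1 : B.choose 2 * 2 = B * (B - 1) := by
          rw [Nat.choose_succ_right_eq B 1, Nat.choose_one_right]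
        have t2 : B.choose 3 * 3 = B.choose 2 * (B - 2) := Nat.choose_succ_right_eq B 2
        calc B.choose 3 * 6 = (B.choose 3 * 3) * 2 := by ring
          _ = (B.choose 2 * (B - 2)) * 2 := by rw [t2]
          _ = (B.choose 2 * 2) * (B - 2) := by ring
          _ = B * (B - 1) * (B - 2) := by rw [t1]
      have e2 : (A.choose 2 : ℤ) * 2 = ℓ n * (ℓ n - 1) := by
        have := congrArg (Nat.cast : ℕ → ℤ) e2n
        push_cast [show 1 ≤ A by omega] at this
        rw [hA] at this; linarith
      have e3 : (B.choose 3 : ℤ) * 6 = ℓ (n - 1) * (ℓ (n - 1) - 1) * (ℓ (n - 1) - 2) := by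
        have := congrArg (Nat.cast : ℕ → ℤ) e3n
        push_cast [show 1 ≤ B by omega, show 2 ≤ B by omega] at this
        rw [hB] at this; linarith
      exact inv_core (ℓ n) (ℓ (n - 1)) (ℓ (n + 1)) _ _ hb12 hpinv' hlow e2 e3

theorem ell_trapped (ℓ : ℕ → ℤ) (h0 : ℓ 0 = 3)
    (hrec : ∀ n : ℕ, ℓ (n + 1) =
      1 + ∑ j ∈ Finset.range (n + 1), (-1) ^ j * ((ℓ (n - j)).toNat.choose (j + 2) : ℤ)) (n : ℕ) :
    1 + ((ℓ n).toNat.choose 2 : ℤ) -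
        (if n = 0 then 0 else ((ℓ (n - 1)).toNat.choose 3 : ℤ)) ≤ ℓ (n + 1) ∧
      ℓ (n + 1) ≤ 1 + ((ℓ n).toNat.choose 2 : ℤ) := by
  apply bounds_aux ℓ hrec n
  intro m _
  obtain ⟨hm3, hminv, _⟩ := ell_main ℓ h0 hrec m
  exact nat_inv_of ℓ m hm3 hminv
end
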